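/- Emptiness for parametric Büchi: for a finite Markov chain M = (S,P,s₀,L) and a ∈ AP, V_{>0}(□◇_{≤x} a) ≠ ∅ if and only if there exists a bottom strongly connected component B of M that is reachable from s₀ in the digraph of M and satisfies n_{a,B} < ∞ (equivalently, every directed cycle inside B contains an a-state). -/

import Mathlib

open MeasureTheory Finset
open scoped ENNReal

attribute [local instance] Classical.propDecidable

namespace PBuchi

variable {S : Type} [Fintype S]

/-- reachability along positive-probability paths -/
def Reach (P : S → S → ℝ≥0∞) (s t : S) : Prop :=
  ∃ (k : ℕ) (u : ℕ → S), u 0 = s ∧ u k = t ∧ ∀ i < k, 0 < P (u i) (u (i + 1))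

theorem Reach.refl (P : S → S → ℝ≥0∞) (s : S) : Reach P s s :=
  ⟨0, fun _ => s, rfl, rfl, by omega⟩

theorem Reach.trans {P : S → S → ℝ≥0∞} {s t v : S} (h1 : Reach P s t) (h2 : Reach P t v) :
    Reach P s v := by
  obtain ⟨k1, u1, hu10, hu1k, hu1p⟩ := h1
  obtain ⟨k2, u2, hu20, hu2k, hu2p⟩ := h2
  refine ⟨k1 + k2, fun i => if i < k1 then u1 i else u2 (i - k1), ?_, ?_, ?_⟩
  · by_cases h : 0 < k1
    · simp [h]; exact hu10
    · have h0 : k1 = 0 := by omega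
      subst h0
      simpa using hu20.trans (hu1k ▸ hu10 ▸ rfl)
  · have : ¬ (k1 + k2 < k1) := by omega
    simp only [this, if_false]
    simpa using hu2k
  · intro i hi
    by_cases h1 : i + 1 < k1
    · have h0 : i < k1 := by omega
      simp only [h0, h1, if_true]
      exact hu1p i h0
    · by_cases h2 : i < k1
      · have he : i + 1 = k1 := by omega
        simp only [h2, h1, if_true, if_false]
        have : u2 (i + 1 - k1) = u1 (i + 1) := by
          rw [he, Nat.sub_self, hu20, ← hu1k]
        rw [this]
        exact hu1p i h2
      · simp only [h2, h1, if_false]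
        have : i + 1 - k1 = (i - k1) + 1 := by omega
        rw [this]
        exact hu2p _ (by omega)

theorem Reach.step {P : S → S → ℝ≥0∞} {s t : S} (h : 0 < P s t) : Reach P s t := by
  refine ⟨1, fun i => if i = 0 then s else t, by simp, by simp, ?_⟩
  intro i hi
  have : i = 0 := by omega
  simp [this, h]

/-- existence of a state all of whose reachable states reach back (a BSCC witness) -/
theorem exists_max (P : S → S → ℝ≥0∞) (s : S) :
    ∃ t, Reach P s t ∧ ∀ x, Reach P t x → Reach P x t := by
  classical
  obtain ⟨t₀, ht₀, hmin⟩ := Finset.exists_min_image (Finset.univ.filter (fun t => Reach P s t))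
    (fun t => (Finset.univ.filter (fun x => Reach P t x)).card)
    ⟨s, by simp [Reach.refl]⟩
  simp only [Finset.mem_filter, Finset.mem_univ, true_and] at ht₀
  refine ⟨t₀, ht₀, fun x hx => ?_⟩
  have hsub : (Finset.univ.filter (fun y => Reach P x y)) ⊆
      (Finset.univ.filter (fun y => Reach P t₀ y)) := by
    intro y hy
    simp only [Finset.mem_filter, Finset.mem_univ, true_and] at hy ⊢
    exact hx.trans hy
  have hxmem : x ∈ Finset.univ.filter (fun t => Reach P s t) := by
    simp only [Finset.mem_filter, Finset.mem_univ, true_and]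
    exact ht₀.trans hx
  have hcard := hmin x hxmem
  have heq : (Finset.univ.filter (fun y => Reach P x y)) =
      (Finset.univ.filter (fun y => Reach P t₀ y)) :=
    Finset.eq_of_subset_of_card_le hsub hcard
  have : t₀ ∈ Finset.univ.filter (fun y => Reach P x y) := by
    rw [heq]; simp [Reach.refl]
  simpa using this

/-- Concatenation of a finite positive path with an infinite positive path. -/
theorem concat_path {P : S → S → ℝ≥0∞} {k : ℕ} {u v : ℕ → S}
    (hu : ∀ i < k, 0 < P (u i) (u (i + 1))) (hv : ∀ t, 0 < P (v t) (v (t + 1)))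
    (hlink : u k = v 0) :
    ∃ w : ℕ → S, w 0 = u 0 ∧ (∀ t, 0 < P (w t) (w (t + 1))) ∧ ∀ t, k ≤ t → w t = v (t - k) := by
  refine ⟨fun t => if t < k then u t else v (t - k), ?_, ?_, ?_⟩
  · by_cases h : 0 < k
    · simp [h]
    · have h0 : k = 0 := by omega
      subst h0
      simpa using hlink.symm
  · intro t
    by_cases h1 : t + 1 < k
    · have h0 : t < k := by omega
      simpa [h0, h1] using hu t h0
    · by_cases h0 : t < k
      · have he : t + 1 = k := by omega
        have : v (t + 1 - k) = u (t + 1) := by rw [he, Nat.sub_self, ← hlink]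
        simp only [h0, h1, if_true, if_false, this]
        exact hu t h0
      · have : t + 1 - k = (t - k) + 1 := by omega
        simp only [h0, h1, if_false, this]
        exact hv _
  · intro t ht
    simp [Nat.not_lt.mpr ht]

/-- Loop forever around a cycle. -/
theorem loop_path {P : S → S → ℝ≥0∞} {u : ℕ → S} {i j m : ℕ} (hij : i < j) (hjm : j ≤ m)
    (huij : u i = u j) (hu : ∀ t < m, 0 < P (u t) (u (t + 1))) :
    ∃ v : ℕ → S, v 0 = u i ∧ (∀ t, 0 < P (v t) (v (t + 1))) ∧
      ∀ t, ∃ x, i ≤ x ∧ x ≤ j ∧ v t = u x := by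
  have hℓpos : 0 < j - i := by omega
  refine ⟨fun t => u (i + t % (j - i)), by simp, ?_, ?_⟩
  · intro t
    simp only
    have hxlt : t % (j - i) < j - i := Nat.mod_lt _ hℓpos
    have hmod : (t + 1) % (j - i) = (t % (j - i) + 1) % (j - i) :=
      (Nat.mod_add_mod t (j - i) 1).symm
    have key := hu (i + t % (j - i)) (by omega)
    by_cases hxe : t % (j - i) + 1 < j - i
    · have h2 : (t + 1) % (j - i) = t % (j - i) + 1 := by
        rw [hmod, Nat.mod_eq_of_lt hxe]
      rw [show i + (t + 1) % (j - i) = i + t % (j - i) + 1 by omega]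
      exact key
    · have h2 : (t + 1) % (j - i) = 0 := by
        rw [hmod, show t % (j - i) + 1 = j - i by omega, Nat.mod_self]
      rw [show i + (t + 1) % (j - i) = i by omega, huij]
      have h3 : u j = u (i + t % (j - i) + 1) := by
        rw [show i + t % (j - i) + 1 = j from by omega]
      rw [h3]
      exact key
  · intro t
    have hxlt : t % (j - i) < j - i := Nat.mod_lt _ hℓpos
    exact ⟨i + t % (j - i), Nat.le_add_right _ _, by omega, rfl⟩


variable {AP : Type}

noncomputable def blockW (P : S → S → ℝ≥0∞) (r : ℕ) (s : S) (w : Fin r → S) : ℝ≥0∞ :=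
  ∏ i : Fin r, P ((Fin.cons s w : Fin (r + 1) → S) i.castSucc) (w i)

def HasRun (L : S → Set AP) (a : AP) (n r : ℕ) (s : S) (w : Fin r → S) : Prop :=
  ∃ c : ℕ, c + n ≤ r ∧
    ∀ i : Fin (r + 1), c ≤ (i : ℕ) → (i : ℕ) ≤ c + n → a ∉ L ((Fin.cons s w : Fin (r + 1) → S) i)

noncomputable def g (P : S → S → ℝ≥0∞) (L : S → Set AP) (a : AP) (n r : ℕ) : ℕ → S → ℝ≥0∞
  | 0, _ => 1
  | k + 1, s => ∑ w ∈ Finset.univ.filter (fun w => ¬ HasRun L a n r s w),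
      blockW P r s w * g P L a n r k ((Fin.cons s w : Fin (r + 1) → S) (Fin.last r))

theorem blockW_cons (P : S → S → ℝ≥0∞) (r : ℕ) (s t : S) (w : Fin r → S) :
    blockW P (r + 1) s (Fin.cons t w) = P s t * blockW P r t w := by
  unfold blockW
  rw [Fin.prod_univ_succ]
  simp only [Fin.castSucc_zero, Fin.cons_zero, Fin.cons_succ]
  congr 1

theorem blockW_sum {P : S → S → ℝ≥0∞} (hP : ∀ s, ∑ t, P s t = 1) :
    ∀ (r : ℕ) (s : S), ∑ w : Fin r → S, blockW P r s w = 1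
  | 0, s => by
    simp [blockW, Finset.sum_const, Finset.card_univ]
  | r + 1, s => by
    rw [← Equiv.sum_comp (Fin.consEquiv (fun _ : Fin (r + 1) => S)) (blockW P (r + 1) s),
      Fintype.sum_prod_type]
    have h1 : ∀ (t : S) (w : Fin r → S),
        blockW P (r + 1) s ((Fin.consEquiv (fun _ : Fin (r + 1) => S)) (t, w))
          = P s t * blockW P r t w := fun t w => blockW_cons P r s t w
    simp only [h1, ← Finset.mul_sum, blockW_sum hP r]
    simpa using hP s

theorem reach_of_blockW_ne {P : S → S → ℝ≥0∞} {r : ℕ} {s : S} {w : Fin r → S}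
    (h : blockW P r s w ≠ 0) : Reach P s ((Fin.cons s w : Fin (r + 1) → S) (Fin.last r)) := by
  have factors : ∀ i : Fin r, P ((Fin.cons s w : Fin (r + 1) → S) i.castSucc) (w i) ≠ 0 := fun i =>
    Finset.prod_ne_zero_iff.mp h i (Finset.mem_univ i)
  refine ⟨r, fun t => (Fin.cons s w : Fin (r + 1) → S) ⟨min t r, Nat.lt_succ_of_le (Nat.min_le_right _ _)⟩, ?_, ?_, ?_⟩
  · exact (congrArg (Fin.cons s w : Fin (r + 1) → S)
      (show (⟨min 0 r, Nat.lt_succ_of_le (Nat.min_le_right _ _)⟩ : Fin (r + 1)) = 0 by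
        simp [Fin.ext_iff])).trans (Fin.cons_zero _ _)
  · exact congrArg (Fin.cons s w : Fin (r + 1) → S)
      (show (⟨min r r, Nat.lt_succ_of_le (Nat.min_le_right _ _)⟩ : Fin (r + 1)) = Fin.last r by
        simp [Fin.ext_iff, Fin.last])
  · intro i hi
    have h1 : min i r = i := Nat.min_eq_left (le_of_lt hi)
    have h2 : min (i + 1) r = i + 1 := Nat.min_eq_left hi
    simp only [h1, h2]
    have e1 : (⟨i, by omega⟩ : Fin (r + 1)) = (⟨i, hi⟩ : Fin r).castSucc := rfl
    have e2 : (⟨i + 1, by omega⟩ : Fin (r + 1)) = (⟨i, hi⟩ : Fin r).succ := rfl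
    rw [e1, e2, Fin.cons_succ]
    exact pos_iff_ne_zero.mpr (factors ⟨i, hi⟩)

theorem g_le {P : S → S → ℝ≥0∞} {L : S → Set AP} {a : AP} {n r : ℕ} {s₀ : S} {δ : ℝ≥0∞}
    (hP : ∀ s, ∑ t, P s t = 1) (hδtop : δ ≠ ⊤)
    (hgood : ∀ s, Reach P s₀ s → ∃ w, HasRun L a n r s w ∧ δ ≤ blockW P r s w) :
    ∀ (k : ℕ) (s : S), Reach P s₀ s → g P L a n r k s ≤ (1 - δ) ^ k
  | 0, s, _ => by simp [g]
  | k + 1, s, hs => by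
    rw [g]
    have hsum : (∑ w ∈ Finset.univ.filter (fun w => ¬ HasRun L a n r s w),
        blockW P r s w) ≤ 1 - δ := by
      obtain ⟨w₀, hw₀run, hw₀δ⟩ := hgood s hs
      have hnot : w₀ ∉ Finset.univ.filter (fun w => ¬ HasRun L a n r s w) := by
        simp [hw₀run]
      refine ENNReal.le_sub_of_add_le_right hδtop ?_
      calc (∑ w ∈ Finset.univ.filter (fun w => ¬ HasRun L a n r s w), blockW P r s w) + δ
          ≤ (∑ w ∈ Finset.univ.filter (fun w => ¬ HasRun L a n r s w), blockW P r s w)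
            + blockW P r s w₀ := add_le_add le_rfl hw₀δ
        _ = ∑ w ∈ insert w₀ (Finset.univ.filter (fun w => ¬ HasRun L a n r s w)),
            blockW P r s w := by rw [Finset.sum_insert hnot, add_comm]
        _ ≤ ∑ w : Fin r → S, blockW P r s w :=
            Finset.sum_le_sum_of_subset (Finset.subset_univ _)
        _ = 1 := blockW_sum hP r s
    calc (∑ w ∈ Finset.univ.filter (fun w => ¬ HasRun L a n r s w),
            blockW P r s w * g P L a n r k ((Fin.cons s w : Fin (r + 1) → S) (Fin.last r)))
        ≤ ∑ w ∈ Finset.univ.filter (fun w => ¬ HasRun L a n r s w),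
            blockW P r s w * (1 - δ) ^ k := by
          refine Finset.sum_le_sum fun w _ => ?_
          by_cases hw : blockW P r s w = 0
          · simp [hw]
          · exact mul_le_mul' le_rfl (g_le hP hδtop hgood k _ (hs.trans (reach_of_blockW_ne hw)))
      _ = (∑ w ∈ Finset.univ.filter (fun w => ¬ HasRun L a n r s w),
            blockW P r s w) * (1 - δ) ^ k := by rw [Finset.sum_mul]
      _ ≤ (1 - δ) * (1 - δ) ^ k := mul_le_mul' hsum le_rfl
      _ = (1 - δ) ^ (k + 1) := (pow_succ' _ _).symm


def cpath (r k : ℕ) (s : S) (p : Fin k → Fin r → S) (t : ℕ) : S :=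
  if h : 1 ≤ t ∧ t ≤ k * r ∧ 0 < r then
    p ⟨(t - 1) / r, by
        obtain ⟨h1, h2, h3⟩ := h
        rw [Nat.div_lt_iff_lt_mul h3]
        omega⟩
      ⟨(t - 1) % r, Nat.mod_lt _ h.2.2⟩
  else s

theorem cpath_zero (r k : ℕ) (s : S) (p : Fin k → Fin r → S) : cpath r k s p 0 = s := by
  simp [cpath]

theorem cpath_eval {r k : ℕ} (hr : 0 < r) (s : S) (p : Fin k → Fin r → S)
    {j i : ℕ} (hj : j < k) (hi : i < r) :
    cpath r k s p (j * r + i + 1) = p ⟨j, hj⟩ ⟨i, hi⟩ := by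
  have hmul : (j + 1) * r ≤ k * r := Nat.mul_le_mul_right _ (Nat.succ_le_of_lt hj)
  have hmul' : (j + 1) * r = j * r + r := by ring
  have hcond : 1 ≤ j * r + i + 1 ∧ j * r + i + 1 ≤ k * r ∧ 0 < r := by omega
  rw [cpath, dif_pos hcond]
  have e : j * r + i + 1 - 1 = i + j * r := by omega
  have h5 : (j * r + i + 1 - 1) / r = j := by
    rw [e, Nat.add_mul_div_right _ _ hr, Nat.div_eq_of_lt hi, Nat.zero_add]
  have h6 : (j * r + i + 1 - 1) % r = i := by
    rw [e, Nat.add_mul_mod_self_right, Nat.mod_eq_of_lt hi]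
  simp only [h5, h6]

theorem cpath_block {r k : ℕ} (hr : 0 < r) (s : S) (p : Fin k → Fin r → S)
    (j : Fin k) (i : Fin (r + 1)) :
    (Fin.cons (cpath r k s p ((j : ℕ) * r)) (p j) : Fin (r + 1) → S) i
      = cpath r k s p ((j : ℕ) * r + (i : ℕ)) := by
  refine Fin.cases ?_ ?_ i
  · simp
  · intro i'
    rw [Fin.cons_succ, Fin.val_succ, ← Nat.add_assoc,
      cpath_eval hr s p j.isLt i'.isLt]

theorem cpath_shift {r k : ℕ} (hr : 0 < r) (s : S) (w : Fin r → S)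
    (p : Fin k → Fin r → S) {t : ℕ} (ht : t ≤ k * r) :
    cpath r (k + 1) s (Fin.cons w p) (r + t)
      = cpath r k ((Fin.cons s w : Fin (r + 1) → S) (Fin.last r)) p t := by
  rcases Nat.eq_zero_or_pos t with ht0 | ht1
  · subst ht0
    rw [cpath_zero, show r + 0 = 0 * r + (r - 1) + 1 by omega,
      cpath_eval hr s (Fin.cons w p) (Nat.succ_pos k) (by omega : r - 1 < r)]
    have hlast : Fin.last r = ((⟨r - 1, by omega⟩ : Fin r).succ : Fin (r + 1)) := by
      simp [Fin.ext_iff]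
      omega
    rw [hlast, Fin.cons_succ]
    have h0 : (⟨0, Nat.succ_pos k⟩ : Fin (k + 1)) = 0 := rfl
    rw [h0, Fin.cons_zero]
  · have hkr : 0 < k := by
      rcases Nat.eq_zero_or_pos k with h | h
      · subst h; omega
      · exact h
    have c1 : 1 ≤ r + t ∧ r + t ≤ (k + 1) * r ∧ 0 < r := by
      constructor
      · omega
      constructor
      · have : (k + 1) * r = k * r + r := by ring
        omega
      · exact hr
    have c2 : 1 ≤ t ∧ t ≤ k * r ∧ 0 < r := ⟨ht1, ht, hr⟩
    rw [cpath, cpath, dif_pos c1, dif_pos c2]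
    have h5 : (r + t - 1) / r = (t - 1) / r + 1 := by
      rw [show r + t - 1 = (t - 1) + r by omega, Nat.add_div_right _ hr]
    have h6 : (r + t - 1) % r = (t - 1) % r := by
      rw [show r + t - 1 = (t - 1) + r by omega, Nat.add_mod_right]
    simp only [h5, h6]
    have hdiv : (t - 1) / r < k := by
      rw [Nat.div_lt_iff_lt_mul hr]
      omega
    have hcons : (Fin.cons w p : Fin (k + 1) → Fin r → S) (⟨(t - 1) / r, hdiv⟩ : Fin k).succ
        = p ⟨(t - 1) / r, hdiv⟩ := Fin.cons_succ _ _ _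
    exact congrFun hcons ⟨(t - 1) % r, Nat.mod_lt _ hr⟩

theorem cpath_succ_block {r k : ℕ} (hr : 0 < r) (s : S) (w : Fin r → S)
    (p' : Fin k → Fin r → S) (j : Fin k) :
    cpath r (k + 1) s (Fin.cons w p') (((j.succ : Fin (k + 1)) : ℕ) * r)
      = cpath r k ((Fin.cons s w : Fin (r + 1) → S) (Fin.last r)) p' ((j : ℕ) * r) := by
  rw [Fin.val_succ, show ((j : ℕ) + 1) * r = r + (j : ℕ) * r by ring]
  exact cpath_shift hr s w p' (Nat.mul_le_mul_right _ (le_of_lt j.isLt))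


def AllFail (L : S → Set AP) (a : AP) (n r k : ℕ) (s : S) (p : Fin k → Fin r → S) : Prop :=
  ∀ j : Fin k, ¬ HasRun L a n r (cpath r k s p ((j : ℕ) * r)) (p j)

noncomputable def Gsum (P : S → S → ℝ≥0∞) (L : S → Set AP) (a : AP) (n r k : ℕ) (s : S) :
    ℝ≥0∞ :=
  ∑ p ∈ Finset.univ.filter (AllFail L a n r k s),
    ∏ j : Fin k, blockW P r (cpath r k s p ((j : ℕ) * r)) (p j)

theorem sum_cons_split {β M : Type} [Fintype β] [AddCommMonoid M] {k : ℕ}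
    (f : (Fin (k + 1) → β) → M) :
    ∑ p : Fin (k + 1) → β, f p = ∑ w : β, ∑ p' : Fin k → β, f (Fin.cons w p') := by
  rw [← Equiv.sum_comp (Fin.consEquiv (fun _ : Fin (k + 1) => β)) f, Fintype.sum_prod_type]
  rfl

theorem Gsum_eq_g {P : S → S → ℝ≥0∞} {L : S → Set AP} {a : AP} {n r : ℕ} (hr : 0 < r) :
    ∀ (k : ℕ) (s : S), Gsum P L a n r k s = g P L a n r k s
  | 0, s => by
    unfold Gsum
    have hall : Finset.univ.filter (AllFail L a n r 0 s) = Finset.univ :=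
      Finset.filter_true_of_mem (fun p _ => fun j => j.elim0)
    rw [hall]
    simp [g]
  | k + 1, s => by
    unfold Gsum
    rw [Finset.sum_filter, sum_cons_split]
    have hmain : ∀ w : Fin r → S,
        (∑ p' : Fin k → Fin r → S,
          (if AllFail L a n r (k + 1) s (Fin.cons w p') then
            ∏ j : Fin (k + 1),
              blockW P r (cpath r (k + 1) s (Fin.cons w p') ((j : ℕ) * r))
                ((Fin.cons w p' : Fin (k + 1) → Fin r → S) j)
          else 0))
        = if ¬ HasRun L a n r s w then
            blockW P r s w *
              g P L a n r k ((Fin.cons s w : Fin (r + 1) → S) (Fin.last r)) else 0 := by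
      intro w
      set s' : S := (Fin.cons s w : Fin (r + 1) → S) (Fin.last r) with hs'
      have hAF : ∀ p' : Fin k → Fin r → S,
          AllFail L a n r (k + 1) s (Fin.cons w p') ↔
            (¬ HasRun L a n r s w ∧ AllFail L a n r k s' p') := by
        intro p'
        unfold AllFail
        rw [Fin.forall_fin_succ]
        constructor
        · rintro ⟨h0, hs⟩
          refine ⟨?_, fun j => ?_⟩
          · simpa [cpath_zero] using h0
          · have := hs j
            rwa [cpath_succ_block hr s w p' j, Fin.cons_succ] at this
        · rintro ⟨h0, hs⟩
          refine ⟨by simpa [cpath_zero] using h0, fun j => ?_⟩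
          rw [cpath_succ_block hr s w p' j, Fin.cons_succ]
          exact hs j
      have hprod : ∀ p' : Fin k → Fin r → S,
          (∏ j : Fin (k + 1),
            blockW P r (cpath r (k + 1) s (Fin.cons w p') ((j : ℕ) * r))
              ((Fin.cons w p' : Fin (k + 1) → Fin r → S) j))
          = blockW P r s w *
            ∏ j : Fin k, blockW P r (cpath r k s' p' ((j : ℕ) * r)) (p' j) := by
        intro p'
        rw [Fin.prod_univ_succ]
        congr 1
        · rw [Fin.cons_zero]
          congr 1
          simpa using cpath_zero r (k + 1) s (Fin.cons w p')
        · refine Finset.prod_congr rfl fun j _ => ?_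
          rw [cpath_succ_block hr s w p' j, Fin.cons_succ]
      by_cases hw : HasRun L a n r s w
      · rw [if_neg (by simpa using hw)]
        refine Finset.sum_eq_zero fun p' _ => ?_
        rw [if_neg]
        rw [hAF]
        simp [hw]
      · rw [if_pos hw]
        have : ∀ p' : Fin k → Fin r → S,
            (if AllFail L a n r (k + 1) s (Fin.cons w p') then
              ∏ j : Fin (k + 1),
                blockW P r (cpath r (k + 1) s (Fin.cons w p') ((j : ℕ) * r))
                  ((Fin.cons w p' : Fin (k + 1) → Fin r → S) j)
            else 0)
            = blockW P r s w *
              (if AllFail L a n r k s' p' then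
                ∏ j : Fin k, blockW P r (cpath r k s' p' ((j : ℕ) * r)) (p' j) else 0) := by
          intro p'
          by_cases hp : AllFail L a n r k s' p'
          · rw [if_pos ((hAF p').mpr ⟨hw, hp⟩), if_pos hp, hprod p']
          · rw [if_neg (fun hcontra => hp ((hAF p').mp hcontra).2), if_neg hp, mul_zero]
        rw [Finset.sum_congr rfl fun p' _ => this p', ← Finset.mul_sum,
          ← Finset.sum_filter, ← Gsum_eq_g hr k s']
        rfl
    refine (Finset.sum_congr rfl fun w _ => hmain w).trans ?_
    rw [g, Finset.sum_filter]

theorem prod_range_blocks {P : S → S → ℝ≥0∞} {r : ℕ} (hr : 0 < r) :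
    ∀ (k : ℕ) (s : S) (p : Fin k → Fin r → S),
    ∏ t ∈ Finset.range (k * r), P (cpath r k s p t) (cpath r k s p (t + 1)) =
      ∏ j : Fin k, blockW P r (cpath r k s p ((j : ℕ) * r)) (p j)
  | 0, s, p => by simp
  | k + 1, s, p => by
    obtain ⟨w, p', rfl⟩ : ∃ w p'', p = Fin.cons w p'' :=
      ⟨p 0, Fin.tail p, (Fin.cons_self_tail p).symm⟩
    set s' : S := (Fin.cons s w : Fin (r + 1) → S) (Fin.last r) with hs'
    rw [show (k + 1) * r = r + k * r by ring, Finset.prod_range_add]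
    have hfirst : (∏ t ∈ Finset.range r,
        P (cpath r (k + 1) s (Fin.cons w p') t) (cpath r (k + 1) s (Fin.cons w p') (t + 1)))
        = blockW P r s w := by
      unfold blockW
      rw [← Fin.prod_univ_eq_prod_range
        (fun t => P (cpath r (k + 1) s (Fin.cons w p') t) (cpath r (k + 1) s (Fin.cons w p') (t + 1))) r]
      refine Finset.prod_congr rfl fun i _ => ?_
      have hb0 := cpath_block hr s (Fin.cons w p') (0 : Fin (k + 1))
      have e1 : (Fin.cons s w : Fin (r + 1) → S) i.castSucc
          = cpath r (k + 1) s (Fin.cons w p') (i : ℕ) := by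
        have h := hb0 i.castSucc
        simp only [Fin.val_zero, Nat.zero_mul, Nat.zero_add, Fin.cons_zero, Fin.cons_succ,
          Fin.coe_castSucc, cpath_zero] at h
        exact h
      have e2 : w i = cpath r (k + 1) s (Fin.cons w p') ((i : ℕ) + 1) := by
        have h := hb0 i.succ
        simp only [Fin.val_zero, Nat.zero_mul, Nat.zero_add, Fin.cons_zero, Fin.val_succ,
          Fin.cons_succ, cpath_zero] at h
        exact h
      rw [← e1, ← e2]
    have hsecond : (∏ t ∈ Finset.range (k * r),
        P (cpath r (k + 1) s (Fin.cons w p') (r + t)) (cpath r (k + 1) s (Fin.cons w p') (r + t + 1)))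
        = ∏ j : Fin k, blockW P r (cpath r k s' p' ((j : ℕ) * r)) (p' j) := by
      rw [← prod_range_blocks hr k s' p']
      refine Finset.prod_congr rfl fun t ht => ?_
      rw [Finset.mem_range] at ht
      rw [cpath_shift hr s w p' (le_of_lt ht), show r + t + 1 = r + (t + 1) by ring,
        cpath_shift hr s w p' (by omega)]
    rw [hfirst, hsecond, Fin.prod_univ_succ]
    congr 1
    · rw [Fin.cons_zero]
      congr 1
      simpa using (cpath_zero r (k + 1) s (Fin.cons w p')).symm
    · refine Finset.prod_congr rfl fun j _ => ?_
      rw [cpath_succ_block hr s w p' j, Fin.cons_succ]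

end PBuchi

open PBuchi

/-- Emptiness for parametric Büchi: for a finite Markov chain `M = (S,P,s₀,L)` and `a ∈ AP`,
`V_{>0}(□◇_{≤x} a) ≠ ∅` iff there is a bottom strongly connected component `B` of `M`,
reachable from `s₀`, with `n_{a,B} < ∞` (the supremum of lengths of `a`-avoiding path
fragments inside `B`, taken in `ℕ ∪ {∞}`, is finite). -/
theorem parametric_buchi_emptiness
    {AP S : Type} [Fintype S] [DecidableEq S] [MeasurableSpace S]
    (P : S → S → ℝ≥0∞) (hP : ∀ s, ∑ t, P s t = 1)
    (s₀ : S) (L : S → Set AP) (a : AP)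
    (μ : Measure (ℕ → S)) (hprob : IsProbabilityMeasure μ)
    (hcyl : ∀ (n : ℕ) (u : ℕ → S),
      μ {π | ∀ k ≤ n, π k = u k} =
        (if u 0 = s₀ then 1 else 0) * ∏ k ∈ Finset.range n, P (u k) (u (k + 1))) :
    {n : ℕ | 0 < μ {π | ∀ i : ℕ, ∃ j, i ≤ j ∧ j ≤ i + n ∧ a ∈ L (π j)}}.Nonempty ↔
      ∃ B : Set S,
        -- B is a BSCC
        B.Nonempty ∧
        (∀ s ∈ B, ∀ t ∈ B, ∃ (k : ℕ) (u : ℕ → S),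
          u 0 = s ∧ u k = t ∧ ∀ i < k, 0 < P (u i) (u (i + 1))) ∧
        (∀ s ∈ B, ∀ t, 0 < P s t → t ∈ B) ∧
        -- B is reachable from s₀
        (∃ t ∈ B, ∃ (k : ℕ) (u : ℕ → S),
          u 0 = s₀ ∧ u k = t ∧ ∀ i < k, 0 < P (u i) (u (i + 1))) ∧
        -- n_{a,B} < ∞
        sSup ((fun m : ℕ => (m : ℕ∞)) ''
          {m : ℕ | ∃ u : ℕ → S,
            (∀ i ≤ m, u i ∈ B ∧ a ∉ L (u i)) ∧
              ∀ i < m, 0 < P (u i) (u (i + 1))}) < ⊤ := by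
  classical
  -- generic covering bound
  have cover : ∀ (m : ℕ) (E : Set (ℕ → S)) {ι : Type} [Fintype ι] (T : Finset ι)
      (c : ι → ℕ → S),
      (∀ π ∈ E, ∃ i ∈ T, ∀ t ≤ m, π t = c i t) →
      μ E ≤ ∑ i ∈ T, ((if c i 0 = s₀ then 1 else 0) *
        ∏ t ∈ Finset.range m, P (c i t) (c i (t + 1))) := by
    intro m E ι _ T c hc
    have hsub : E ⊆ ⋃ i ∈ T, {π : ℕ → S | ∀ t ≤ m, π t = c i t} := by
      intro π hπ
      obtain ⟨i, hiT, hi⟩ := hc π hπ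
      exact Set.mem_biUnion hiT hi
    calc μ E ≤ μ (⋃ i ∈ T, {π : ℕ → S | ∀ t ≤ m, π t = c i t}) := measure_mono hsub
      _ ≤ ∑ i ∈ T, μ {π : ℕ → S | ∀ t ≤ m, π t = c i t} := measure_biUnion_finset_le T _
      _ = _ := Finset.sum_congr rfl fun i _ => hcyl m (c i)
  -- null sets
  have hbad0 : μ {π : ℕ → S | π 0 ≠ s₀} = 0 := by
    refine le_antisymm ?_ (zero_le)
    have h := cover 0 {π : ℕ → S | π 0 ≠ s₀}
      (Finset.univ.filter (fun s : S => s ≠ s₀)) (fun s _ => s) ?_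
    · refine h.trans_eq (Finset.sum_eq_zero fun s hs => ?_)
      simp only [Finset.mem_filter] at hs
      simp [hs.2]
    · intro π hπ
      refine ⟨π 0, by simpa using hπ, fun t ht => ?_⟩
      have : t = 0 := by omega
      subst this
      rfl
  have hbadi : ∀ i : ℕ, μ {π : ℕ → S | P (π i) (π (i + 1)) = 0} = 0 := by
    intro i
    refine le_antisymm ?_ (zero_le)
    have h := cover (i + 1) {π : ℕ → S | P (π i) (π (i + 1)) = 0}
      (Finset.univ.filter
        (fun v : Fin (i + 2) → S => P (v ⟨i, by omega⟩) (v ⟨i + 1, by omega⟩) = 0))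
      (fun v t => v ⟨min t (i + 1), by omega⟩) ?_
    · refine h.trans_eq (Finset.sum_eq_zero fun v hv => ?_)
      simp only [Finset.mem_filter] at hv
      by_cases h0 : (v ⟨min 0 (i + 1), by omega⟩ : S) = s₀
      · rw [if_pos h0, one_mul]
        refine Finset.prod_eq_zero (Finset.self_mem_range_succ i) ?_
        have e1 : min i (i + 1) = i := by omega
        have e2 : min (i + 1) (i + 1) = i + 1 := by omega
        simp only [e1, e2]
        exact hv.2
      · rw [if_neg h0, zero_mul]
    · intro π hπ
      refine ⟨fun t : Fin (i + 2) => π t, ?_, fun t ht => ?_⟩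
      · simp only [Finset.mem_filter]
        exact ⟨Finset.mem_univ _, hπ⟩
      · have : min t (i + 1) = t := by omega
        simp only [this]
  constructor
  · -- forward direction
    rintro ⟨n, hn⟩
    rw [Set.mem_setOf_eq] at hn
    by_contra hB
    -- every reachable state has an eventually-a-free infinite path
    have tailpath : ∀ s : S, Reach P s₀ s →
        ∃ (m : ℕ) (v : ℕ → S), v 0 = s ∧ (∀ t, 0 < P (v t) (v (t + 1))) ∧
          ∀ t, m ≤ t → a ∉ L (v t) := by
      intro s hs
      obtain ⟨t₀, hst₀, hmax⟩ := exists_max P s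
      have hnot : ¬ (sSup ((fun m : ℕ => (m : ℕ∞)) ''
          {m : ℕ | ∃ u : ℕ → S,
            (∀ i ≤ m, u i ∈ {x | Reach P t₀ x} ∧ a ∉ L (u i)) ∧
              ∀ i < m, 0 < P (u i) (u (i + 1))}) < ⊤) := by
        intro hlt
        refine hB ⟨{x | Reach P t₀ x}, ⟨t₀, Reach.refl P t₀⟩, ?_, ?_, ?_, hlt⟩
        · intro x hx y hy
          exact (hmax x hx).trans hy
        · intro x hx y hxy
          exact hx.trans (Reach.step hxy)
        · exact ⟨t₀, Reach.refl P t₀, hs.trans hst₀⟩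
      have hub : ∃ m ∈ {m : ℕ | ∃ u : ℕ → S,
            (∀ i ≤ m, u i ∈ {x | Reach P t₀ x} ∧ a ∉ L (u i)) ∧
              ∀ i < m, 0 < P (u i) (u (i + 1))}, Fintype.card S < m := by
        by_contra hcon
        push_neg at hcon
        refine hnot (lt_of_le_of_lt (sSup_le ?_)
          (?_ : (Fintype.card S : ℕ∞) < ⊤))
        · rintro x ⟨m, hm, rfl⟩
          simpa using hcon m hm
        · exact Ne.lt_top (by simp)
      obtain ⟨m, ⟨u, hu1, hu2⟩, hmgt⟩ := hub
      obtain ⟨i1, i2, hne, hequ⟩ := Fintype.exists_ne_map_eq_of_card_lt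
        (fun x : Fin (Fintype.card S + 1) => u x) (by simp)
      have hvne : (i1 : ℕ) ≠ (i2 : ℕ) := fun h => hne (Fin.ext h)
      obtain ⟨I, J, hIJ, hJcard, hUIJ⟩ :
          ∃ I J : ℕ, I < J ∧ J ≤ Fintype.card S ∧ u I = u J := by
        rcases Nat.lt_or_ge (i1 : ℕ) (i2 : ℕ) with hlt | hge
        · exact ⟨i1, i2, hlt, by omega, hequ⟩
        · exact ⟨i2, i1, by omega, by omega, hequ.symm⟩
      have hJm : J ≤ m := by omega
      obtain ⟨v2, hv20, hv2pos, hv2val⟩ := loop_path (P := P) hIJ hJm hUIJ hu2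
      obtain ⟨k₂, u₂, hu₂0, hu₂k, hu₂pos⟩ := (hu1 I (by omega)).1
      obtain ⟨w2, hw20, hw2pos, hw2tail⟩ := concat_path hu₂pos hv2pos (by rw [hu₂k, hv20])
      obtain ⟨k₁, u₁, hu₁0, hu₁k, hu₁pos⟩ := hst₀
      obtain ⟨w1, hw10, hw1pos, hw1tail⟩ := concat_path hu₁pos hw2pos
        (by rw [hu₁k, hw20, hu₂0])
      refine ⟨k₁ + k₂, w1, by rw [hw10, hu₁0], hw1pos, ?_⟩
      intro t htt
      rw [hw1tail t (by omega), hw2tail (t - k₁) (by omega)]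
      obtain ⟨x, hx1, hx2, hxe⟩ := hv2val (t - k₁ - k₂)
      rw [hxe]
      exact (hu1 x (by omega)).2
    choose! mfun vfun hv0 hvpos hvfree using tailpath
    set K := Finset.univ.sup mfun with hK
    set r := K + n + 1 with hrdef
    have hr : 0 < r := by omega
    have hSne : (Finset.univ : Finset (S × S)).Nonempty := ⟨(s₀, s₀), Finset.mem_univ _⟩
    set ε := Finset.univ.inf' hSne
      (fun q : S × S => if 0 < P q.1 q.2 then P q.1 q.2 else 1) with hε
    have hεpos : 0 < ε := by
      rw [hε, Finset.lt_inf'_iff]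
      intro q _
      split_ifs with h
      · exact h
      · exact zero_lt_one
    have hεle : ∀ s t : S, 0 < P s t → ε ≤ P s t := by
      intro s t h
      have h2 := Finset.inf'_le
        (fun q : S × S => if 0 < P q.1 q.2 then P q.1 q.2 else 1) (Finset.mem_univ (s, t))
      rw [if_pos h] at h2
      exact h2
    have hPle1 : ∀ s t : S, P s t ≤ 1 := by
      intro s t
      rw [← hP s]
      exact Finset.single_le_sum (fun _ _ => zero_le) (Finset.mem_univ t)
    set δ := ε ^ r with hδdef
    have hδpos : 0 < δ := ENNReal.pow_pos hεpos r
    have hδtop : δ ≠ ⊤ := by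
      have hε1 : ε ≤ 1 := by
        refine le_trans (Finset.inf'_le _ (Finset.mem_univ (s₀, s₀))) ?_
        split_ifs with h
        · exact hPle1 _ _
        · exact le_rfl
      exact ne_top_of_le_ne_top ENNReal.one_ne_top (pow_le_one' hε1 r)
    have hgood : ∀ s, Reach P s₀ s →
        ∃ w, HasRun L a n r s w ∧ δ ≤ blockW P r s w := by
      intro s hs
      have hconsv : ∀ i : Fin (r + 1),
          (Fin.cons s (fun i : Fin r => vfun s ((i : ℕ) + 1)) : Fin (r + 1) → S) i
            = vfun s (i : ℕ) := by
        intro i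
        refine Fin.cases ?_ ?_ i
        · rw [Fin.cons_zero, Fin.val_zero]
          exact (hv0 s hs).symm
        · intro i'
          rw [Fin.cons_succ, Fin.val_succ]
      refine ⟨fun i : Fin r => vfun s ((i : ℕ) + 1), ?_, ?_⟩
      · refine ⟨mfun s, ?_, ?_⟩
        · have : mfun s ≤ K := Finset.le_sup (Finset.mem_univ s)
          omega
        · intro i hi1 _
          rw [hconsv i]
          exact hvfree s hs (i : ℕ) hi1
      · have hδeq : δ = ∏ _i : Fin r, ε := by
          rw [Finset.prod_const, Finset.card_univ, Fintype.card_fin, hδdef]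
        rw [hδeq]
        unfold blockW
        refine Finset.prod_le_prod' fun i _ => ?_
        have hc := hconsv i.castSucc
        rw [Fin.coe_castSucc] at hc
        rw [hc]
        exact hεle _ _ (hvpos s hs (i : ℕ))
    have hdecay := g_le (P := P) (L := L) (a := a) (n := n) (r := r) (s₀ := s₀)
      hP hδtop hgood
    have hμk : ∀ k : ℕ,
        μ {π : ℕ → S | ∀ i : ℕ, ∃ j, i ≤ j ∧ j ≤ i + n ∧ a ∈ L (π j)} ≤ (1 - δ) ^ k := by
      intro k
      refine le_trans (cover (k * r) _
        (Finset.univ.filter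
          (fun q : S × (Fin k → Fin r → S) => AllFail L a n r k q.1 q.2))
        (fun q => cpath r k q.1 q.2) ?_) ?_
      · -- covering condition
        intro π hπ
        set p : Fin k → Fin r → S := fun j i => π ((j : ℕ) * r + (i : ℕ) + 1) with hp
        have hagree : ∀ t, t ≤ k * r → π t = cpath r k (π 0) p t := by
          intro t ht
          rcases Nat.eq_zero_or_pos t with rfl | ht1
          · rw [cpath_zero]
          · have hcond : 1 ≤ t ∧ t ≤ k * r ∧ 0 < r := ⟨ht1, ht, hr⟩
            rw [cpath, dif_pos hcond]
            show π t = π ((t - 1) / r * r + (t - 1) % r + 1)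
            have hmm := Nat.div_add_mod (t - 1) r
            have hcomm : (t - 1) / r * r = r * ((t - 1) / r) := Nat.mul_comm _ _
            have he : (t - 1) / r * r + (t - 1) % r + 1 = t := by omega
            rw [he]
        refine ⟨(π 0, p), ?_, fun t ht => hagree t ht⟩
        simp only [Finset.mem_filter]
        refine ⟨Finset.mem_univ _, fun j => ?_⟩
        rintro ⟨c, hcn, hfree⟩
        obtain ⟨j', hj'1, hj'2, hj'a⟩ := hπ ((j : ℕ) * r + c)
        set d := j' - ((j : ℕ) * r + c) with hdd
        have hd : d ≤ n := by omega
        have hidx : c + d ≤ r := by omega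
        have h1 := hfree ⟨c + d, by omega⟩ (by simp) (by simp; omega)
        have h2 := cpath_block hr (π 0) p j ⟨c + d, by omega⟩
        rw [h2] at h1
        have hbk : (j : ℕ) * r + (c + d) ≤ k * r := by
          have hjk : (j : ℕ) + 1 ≤ k := j.isLt
          have hb : ((j : ℕ) + 1) * r ≤ k * r := Nat.mul_le_mul_right r hjk
          have hb' : ((j : ℕ) + 1) * r = (j : ℕ) * r + r := by ring
          omega
        rw [← hagree ((j : ℕ) * r + (c + d)) hbk] at h1
        rw [show (j : ℕ) * r + (c + d) = j' by omega] at h1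
        exact h1 hj'a
      · -- sum bound
        have heq : ∀ q : S × (Fin k → Fin r → S),
            ((if cpath r k q.1 q.2 0 = s₀ then 1 else 0) *
              ∏ t ∈ Finset.range (k * r),
                P (cpath r k q.1 q.2 t) (cpath r k q.1 q.2 (t + 1)))
            = (if q.1 = s₀ then 1 else 0) *
              ∏ j : Fin k, blockW P r (cpath r k q.1 q.2 ((j : ℕ) * r)) (q.2 j) := by
          intro q
          rw [cpath_zero, prod_range_blocks hr]
        refine le_trans (le_of_eq (Finset.sum_congr rfl fun q _ => heq q)) ?_
        rw [Finset.sum_filter, Fintype.sum_prod_type]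
        have hcol : ∀ s' : S, (∑ p : Fin k → Fin r → S,
            if AllFail L a n r k s' p then (if s' = s₀ then 1 else 0) *
              ∏ j : Fin k, blockW P r (cpath r k s' p ((j : ℕ) * r)) (p j) else 0)
            = if s' = s₀ then Gsum P L a n r k s' else 0 := by
          intro s'
          by_cases hss : s' = s₀
          · subst hss
            simp only [eq_self_iff_true, if_true, one_mul, Gsum, Finset.sum_filter]
          · simp only [if_neg hss, zero_mul, ite_self, Finset.sum_const_zero]
        refine le_trans (le_of_eq (Finset.sum_congr rfl fun s' _ => hcol s')) ?_
        rw [Finset.sum_ite_eq' Finset.univ s₀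
          (fun s' => Gsum P L a n r k s'), if_pos (Finset.mem_univ s₀)]
        rw [Gsum_eq_g hr k s₀]
        exact hdecay k s₀ (Reach.refl P s₀)
    have htend := ENNReal.tendsto_pow_atTop_nhds_zero_of_lt_one
      (ENNReal.sub_lt_self ENNReal.one_ne_top one_ne_zero hδpos.ne')
    have hzero : μ {π : ℕ → S | ∀ i : ℕ, ∃ j, i ≤ j ∧ j ≤ i + n ∧ a ∈ L (π j)} ≤ 0 :=
      ge_of_tendsto' htend hμk
    exact absurd (lt_of_lt_of_le hn hzero) (lt_irrefl 0)

  · -- backward direction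
    rintro ⟨B, hBne, hBmut, hBclosed, ⟨tB, htB, kB, uB, huB0, huBk, huBpos⟩, hsup⟩
    obtain ⟨N, hN0⟩ := WithTop.ne_top_iff_exists.mp hsup.ne
    have hN : sSup ((fun m : ℕ => (m : ℕ∞)) ''
        {m : ℕ | ∃ u : ℕ → S,
          (∀ i ≤ m, u i ∈ B ∧ a ∉ L (u i)) ∧
            ∀ i < m, 0 < P (u i) (u (i + 1))}) = (N : ℕ∞) := by
      exact_mod_cast hN0.symm
    have hbound : ∀ m ∈ {m : ℕ | ∃ u : ℕ → S,
        (∀ i ≤ m, u i ∈ B ∧ a ∉ L (u i)) ∧ ∀ i < m, 0 < P (u i) (u (i + 1))}, m ≤ N := by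
      intro m hm
      have h1 : (fun m : ℕ => (m : ℕ∞)) m ≤ (N : ℕ∞) := by
        rw [← hN]
        exact le_sSup (Set.mem_image_of_mem _ hm)
      have h2 : (m : ℕ∞) ≤ (N : ℕ∞) := h1
      exact_mod_cast h2
    refine ⟨kB + N + 1, ?_⟩
    rw [Set.mem_setOf_eq]
    set E := {π : ℕ → S | ∀ i : ℕ, ∃ j, i ≤ j ∧ j ≤ i + (kB + N + 1) ∧ a ∈ L (π j)} with hE
    set Bad := {π : ℕ → S | π 0 ≠ s₀} ∪ ⋃ i : ℕ, {π : ℕ → S | P (π i) (π (i + 1)) = 0}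
      with hBadDef
    have hBad : μ Bad = 0 := by
      refine le_antisymm ?_ (zero_le)
      calc μ Bad ≤ μ {π : ℕ → S | π 0 ≠ s₀}
            + μ (⋃ i : ℕ, {π : ℕ → S | P (π i) (π (i + 1)) = 0}) := measure_union_le _ _
        _ ≤ 0 + ∑' i : ℕ, μ {π : ℕ → S | P (π i) (π (i + 1)) = 0} := by
            rw [hbad0]
            exact add_le_add le_rfl (measure_iUnion_le _)
        _ = 0 := by simp [hbadi]
    set C := {π : ℕ → S | ∀ t ≤ kB, π t = uB t} with hC
    have hCpos : 0 < μ C := by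
      rw [hC, hcyl kB uB, if_pos huB0, one_mul]
      rw [pos_iff_ne_zero]
      rw [Finset.prod_ne_zero_iff]
      intro t ht
      rw [Finset.mem_range] at ht
      exact (huBpos t ht).ne'
    have hincl : C ⊆ E ∪ Bad := by
      intro π hπC
      by_cases hπB : π ∈ Bad
      · exact Or.inr hπB
      refine Or.inl ?_
      rw [hBadDef, Set.mem_union] at hπB
      push_neg at hπB
      obtain ⟨hπ0, hπpos⟩ := hπB
      have hπ0' : π 0 = s₀ := by simpa using hπ0
      have hπpos' : ∀ i : ℕ, 0 < P (π i) (π (i + 1)) := by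
        intro i
        rw [pos_iff_ne_zero]
        intro h0
        exact hπpos (Set.mem_iUnion.mpr ⟨i, h0⟩)
      have hstay : ∀ d : ℕ, π (kB + d) ∈ B := by
        intro d
        induction d with
        | zero => rw [Nat.add_zero, hπC kB le_rfl, huBk]; exact htB
        | succ d ih => exact hBclosed _ ih _ (hπpos' (kB + d))
      intro i
      by_contra hno
      push_neg at hno
      have hmem : (N + 1) ∈ {m : ℕ | ∃ u : ℕ → S,
          (∀ i' ≤ m, u i' ∈ B ∧ a ∉ L (u i')) ∧ ∀ i' < m, 0 < P (u i') (u (i' + 1))} := by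
        refine ⟨fun x => π (max i kB + x), fun x hx => ⟨?_, ?_⟩, fun x _ => hπpos' _⟩
        · show π (max i kB + x) ∈ B
          have he : max i kB + x = kB + (max i kB - kB + x) := by omega
          rw [he]
          exact hstay _
        · exact hno (max i kB + x) (by omega) (by omega)
      exact absurd (hbound _ hmem) (by omega)
    have : μ C ≤ μ E + μ Bad := (measure_mono hincl).trans (measure_union_le _ _)
    rw [hBad, add_zero] at this
    exact lt_of_lt_of_le hCpos this
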